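/- Let f ∈ R⟦z⟧ have zero constant term and invertible linear coefficient, and let y be its compositional inverse (so f ∘ y = y ∘ f = z). Denote F(n,k) = coeff of z^n in f^k and Y(n,k) = coeff of z^n in y^k. Then for all n ≥ m ≥ 1: ∑_{k=m}^{n} Y(n,k)·F(k,m) = δ(n,m) (Kronecker delta). -/

import Mathlib

open PowerSeries Finset

/-- Composition `g(f(z))` of formal power series, for `f` with zero constant term. -/
noncomputable def PowerSeries.compose {R : Type*} [CommRing R] (g f : PowerSeries R) :
    PowerSeries R :=
  PowerSeries.mk fun n =>
    ∑ k ∈ Finset.range (n + 1), PowerSeries.coeff k g * PowerSeries.coeff n (f ^ k)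

section Aux

variable {R : Type*} [CommRing R]

lemma aux_coeff_pow_zero {y : PowerSeries R} (hy0 : PowerSeries.constantCoeff y = 0)
    {n k : ℕ} (h : n < k) : PowerSeries.coeff n (y ^ k) = 0 := by
  obtain ⟨u, hu⟩ := pow_dvd_pow_of_dvd (PowerSeries.X_dvd_iff.2 hy0) k
  rw [hu, PowerSeries.coeff_mul]
  apply Finset.sum_eq_zero
  rintro ⟨a, b⟩ hab
  rw [Finset.HasAntidiagonal.mem_antidiagonal] at hab
  have ha : a ≠ k := by omega
  simp [PowerSeries.coeff_X_pow, ha]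

lemma aux_coeff_compose (g y : PowerSeries R) (n : ℕ) :
    PowerSeries.coeff n (g.compose y)
      = ∑ k ∈ Finset.range (n + 1),
          PowerSeries.coeff k g * PowerSeries.coeff n (y ^ k) := by
  simp [PowerSeries.compose]

/-- coefficient `n` of a power depends only on the truncation at `n+1`. -/
lemma aux_coeff_pow_trunc (A : PowerSeries R) (n m : ℕ) :
    PowerSeries.coeff n (A ^ m)
      = PowerSeries.coeff n (((PowerSeries.trunc (n + 1) A : Polynomial R) :
          PowerSeries R) ^ m) := by
  rw [← PowerSeries.coeff_coe_trunc_of_lt (Nat.lt_succ_self n) (f := A ^ m),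
    ← PowerSeries.trunc_trunc_pow,
    PowerSeries.coeff_coe_trunc_of_lt (Nat.lt_succ_self n)]

lemma aux_compose_eval₂ {y : PowerSeries R} (hy0 : PowerSeries.constantCoeff y = 0)
    (P : Polynomial R) (n : ℕ) :
    PowerSeries.coeff n (PowerSeries.compose (P : PowerSeries R) y)
      = PowerSeries.coeff n (Polynomial.eval₂ PowerSeries.C y P) := by
  rw [aux_coeff_compose]
  rw [Polynomial.eval₂_eq_sum_range' PowerSeries.C
    (show P.natDegree < max (n + 1) (P.natDegree + 1) from
      lt_of_lt_of_le (Nat.lt_succ_self _) (le_max_right _ _)) y]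
  rw [map_sum]
  rw [Finset.sum_subset (Finset.range_subset_range.2 (le_max_left (n + 1) (P.natDegree + 1)))]
  · apply Finset.sum_congr rfl
    intro k _
    rw [PowerSeries.coeff_C_mul, Polynomial.coeff_coe]
  · intro k _ hk
    rw [Finset.mem_range, not_lt] at hk
    rw [aux_coeff_pow_zero hy0 (by omega), mul_zero]

end Aux

theorem composita_inverse {R : Type*} [CommRing R] (f y : PowerSeries R)
    (hf0 : PowerSeries.constantCoeff f = 0) (hf1 : IsUnit (PowerSeries.coeff 1 f))
    (hy0 : PowerSeries.constantCoeff y = 0)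
    (hfy : PowerSeries.compose f y = PowerSeries.X)
    (hyf : PowerSeries.compose y f = PowerSeries.X)
    (n m : ℕ) (hm : 1 ≤ m) (hmn : m ≤ n) :
    ∑ k ∈ Finset.Icc m n,
        PowerSeries.coeff n (y ^ k) * PowerSeries.coeff k (f ^ m)
      = if n = m then 1 else 0 := by
  set P : Polynomial R := PowerSeries.trunc (n + 1) f with hP
  -- Step 1: the sum is coeff n of compose (f^m) y
  have step1 : ∑ k ∈ Finset.Icc m n,
      PowerSeries.coeff n (y ^ k) * PowerSeries.coeff k (f ^ m)
      = PowerSeries.coeff n (PowerSeries.compose (f ^ m) y) := by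
    rw [aux_coeff_compose]
    rw [← Finset.sum_subset (show Finset.Icc m n ⊆ Finset.range (n + 1) by
      intro k hk; rw [Finset.mem_Icc] at hk; rw [Finset.mem_range]; omega)]
    · exact Finset.sum_congr rfl fun k _ => mul_comm _ _
    · intro k hk hk'
      rw [Finset.mem_range] at hk
      rw [Finset.mem_Icc, not_and_or, not_le, not_le] at hk'
      have hkm : k < m := by omega
      rw [aux_coeff_pow_zero hf0 hkm, zero_mul]
  -- coefficients of f^m up to n agree with those of (↑P)^m
  have hcoe : ∀ k ≤ n, PowerSeries.coeff k (f ^ m)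
      = PowerSeries.coeff k (((P : PowerSeries R)) ^ m) := by
    intro k hk
    rw [← PowerSeries.coeff_coe_trunc_of_lt (show k < n + 1 by omega) (f := f ^ m),
      ← PowerSeries.trunc_trunc_pow,
      PowerSeries.coeff_coe_trunc_of_lt (show k < n + 1 by omega)]
  -- Step 2: coeff n (compose (f^m) y) = coeff n ((eval₂ C y P)^m)
  have step2 : PowerSeries.coeff n (PowerSeries.compose (f ^ m) y)
      = PowerSeries.coeff n ((Polynomial.eval₂ PowerSeries.C y P) ^ m) := by
    rw [aux_coeff_compose]
    have : ∑ k ∈ Finset.range (n + 1),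
        PowerSeries.coeff k (f ^ m) * PowerSeries.coeff n (y ^ k)
        = ∑ k ∈ Finset.range (n + 1),
          PowerSeries.coeff k (((P : PowerSeries R)) ^ m) * PowerSeries.coeff n (y ^ k) := by
      refine Finset.sum_congr rfl fun k hk => ?_
      rw [Finset.mem_range] at hk
      rw [hcoe k (by omega)]
    rw [this]
    have h2 : ((P ^ m : Polynomial R) : PowerSeries R) = ((P : PowerSeries R)) ^ m := by
      push_cast; ring
    rw [← aux_coeff_compose (((P : PowerSeries R)) ^ m) y n, ← h2,
      aux_compose_eval₂ hy0, ← Polynomial.eval₂_pow]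
  -- Step 3: eval₂ C y P agrees with X up to coeff n
  have hE : ∀ j ≤ n, PowerSeries.coeff j (Polynomial.eval₂ PowerSeries.C y P)
      = PowerSeries.coeff j (PowerSeries.X : PowerSeries R) := by
    intro j hj
    rw [← aux_compose_eval₂ hy0, aux_coeff_compose, ← hfy, aux_coeff_compose]
    refine Finset.sum_congr rfl fun k hk => ?_
    rw [Finset.mem_range] at hk
    have : PowerSeries.coeff k ((P : PowerSeries R)) = PowerSeries.coeff k f := by
      rw [PowerSeries.coeff_coe_trunc_of_lt (show k < n + 1 by omega)]
    rw [this]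
  have step3 : PowerSeries.coeff n ((Polynomial.eval₂ PowerSeries.C y P) ^ m)
      = PowerSeries.coeff n ((PowerSeries.X : PowerSeries R) ^ m) := by
    rw [aux_coeff_pow_trunc, aux_coeff_pow_trunc (PowerSeries.X : PowerSeries R)]
    congr 2
    ext j
    rw [Polynomial.coeff_coe, Polynomial.coeff_coe,
      PowerSeries.coeff_trunc, PowerSeries.coeff_trunc]
    split_ifs with h
    · exact hE j (by omega)
    · rfl
  rw [step1, step2, step3, PowerSeries.coeff_X_pow]
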